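/- Let V(Σ) be n-permutable for some n > 2, witnessed by Hagemann–Mitschke terms p₁,...,p_{n-1} satisfying x ≈ p₁(x,y,y), p_i(x,x,y) ≈ p_{i+1}(x,y,y) for 0 < i < n-1, and p_{n-1}(x,x,y) ≈ y. If additionally there exists a quaternary term s with Σ ⊢ p₁(x,y,z) ≈ s(x,y,z,z) and Σ ⊢ p₂(x,y,z) ≈ s(x,x,y,z), then V(Σ) is (n-1)-permutable: there exist terms m, p₃, ..., p_{n-1} satisfying the Hagemann–Mitschke chain of length n-1, where m(x,y,z) := s(x,y,y,z). -/
import Mathlib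


universe u

/-- A finitary algebraic signature. -/
structure Sig where
  ops : Type
  ar : ops → ℕ

namespace UA

/-- Terms over the signature `S` with variables from `X`. -/
inductive Term (S : Sig) (X : Type) : Type where
  | var : X → Term S X
  | app : (o : S.ops) → (Fin (S.ar o) → Term S X) → Term S X

/-- Simultaneous substitution of terms for variables. -/
def Term.subst {S : Sig} {X Y : Type} (σ : X → Term S Y) : Term S X → Term S Y
  | .var x => σ x
  | .app o ts => .app o fun i => (ts i).subst σ

/-- Renaming (substitution of variables for variables). -/
def Term.rename {S : Sig} {X Y : Type} (φ : X → Y) (t : Term S X) : Term S Y :=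
  t.subst fun x => .var (φ x)

/-- Equational provability from the set `Γ` of axioms (pairs of terms over the
countable variable set `ℕ`), over arbitrary variable sets. -/
inductive Eqv {S : Sig} (Γ : Set (Term S ℕ × Term S ℕ)) :
    {X : Type} → Term S X → Term S X → Prop where
  | axm {X : Type} {l r : Term S ℕ} (h : (l, r) ∈ Γ) (σ : ℕ → Term S X) :
      Eqv Γ (l.subst σ) (r.subst σ)
  | refl {X : Type} (t : Term S X) : Eqv Γ t t
  | symm {X : Type} {t u : Term S X} : Eqv Γ t u → Eqv Γ u t
  | trans {X : Type} {t u v : Term S X} : Eqv Γ t u → Eqv Γ u v → Eqv Γ t v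
  | congr {X : Type} (o : S.ops) {ts us : Fin (S.ar o) → Term S X} :
      (∀ i, Eqv Γ (ts i) (us i)) → Eqv Γ (.app o ts) (.app o us)
  | sbst {X Y : Type} {t u : Term S X} (σ : X → Term S Y) :
      Eqv Γ t u → Eqv Γ (t.subst σ) (u.subst σ)

def termSetoid {S : Sig} (Γ : Set (Term S ℕ × Term S ℕ)) (X : Type) : Setoid (Term S X) :=
  ⟨Eqv Γ, ⟨fun t => .refl t, fun h => h.symm, fun h h' => h.trans h'⟩⟩

/-- The free algebra over the variable set `X` in the variety axiomatized by `Γ`: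
terms modulo `Γ`-provable equality.  This is the object part of the free-algebra
functor `F_Σ`. -/
def FreeAlg {S : Sig} (Γ : Set (Term S ℕ × Term S ℕ)) (X : Type) : Type :=
  Quotient (termSetoid Γ X)

/-- The action of the free-algebra functor `F_Σ` on maps: variable substitution. -/
def FreeAlg.map {S : Sig} {Γ : Set (Term S ℕ × Term S ℕ)} {X Y : Type} (φ : X → Y) :
    FreeAlg Γ X → FreeAlg Γ Y :=
  Quotient.map (Term.rename φ) fun _ _ h => h.sbst _

end UA

namespace UA

variable {S : Sig}

/-- The Hagemann–Mitschke chain witnessing `n`-permutability: ternary terms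
`p 1, …, p (n-1)` with `x ≈ p₁(x,y,y)`, `pᵢ(x,x,y) ≈ pᵢ₊₁(x,y,y)` for `0 < i < n-1`
and `pₙ₋₁(x,x,y) ≈ y`. -/
def HMChain (Γ : Set (Term S ℕ × Term S ℕ)) (n : ℕ) (p : ℕ → Term S (Fin 3)) : Prop :=
  Eqv Γ (Term.var 0 : Term S ℕ) ((p 1).rename ![0, 1, 1]) ∧
  (∀ i, 0 < i → i < n - 1 →
    Eqv Γ ((p i).rename ![0, 0, 1]) ((p (i + 1)).rename ![0, 1, 1] : Term S ℕ)) ∧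
  Eqv Γ ((p (n - 1)).rename ![0, 0, 1]) (Term.var 1 : Term S ℕ)

theorem Term.subst_subst {X Y Z : Type} (σ : X → Term S Y) (τ : Y → Term S Z)
    (t : Term S X) : (t.subst σ).subst τ = t.subst (fun x => (σ x).subst τ) := by
  induction t with
  | var x => rfl
  | app o ts ih => simp only [Term.subst]; exact congrArg _ (funext ih)

theorem Term.rename_subst {X Y Z : Type} (φ : X → Y) (σ : Y → Term S Z)
    (t : Term S X) : (t.rename φ).subst σ = t.subst (σ ∘ φ) := by
  rw [Term.rename, Term.subst_subst]; rfl

theorem Term.rename_rename {X Y Z : Type} (φ : X → Y) (ψ : Y → Z)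
    (t : Term S X) : (t.rename φ).rename ψ = t.rename (ψ ∘ φ) := by
  rw [Term.rename, Term.rename, Term.subst_subst]; rfl

/-- Chain shortening: if `V(Σ)` is `n`-permutable (`n > 2`) via Hagemann–Mitschke
terms `p₁, …, pₙ₋₁` and there is a quaternary term `s` with
`Σ ⊢ p₁(x,y,z) ≈ s(x,y,z,z)` and `Σ ⊢ p₂(x,y,z) ≈ s(x,x,y,z)`, then `V(Σ)` is
`(n-1)`-permutable, with first term `m(x,y,z) := s(x,y,y,z)`. -/
theorem chain_shortening
    (Γ : Set (Term S ℕ × Term S ℕ)) (n : ℕ) (hn : 2 < n)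
    (p : ℕ → Term S (Fin 3)) (hp : HMChain Γ n p)
    (s : Term S (Fin 4))
    (hs₁ : Eqv Γ ((p 1).rename ![0, 1, 2]) (s.rename ![0, 1, 2, 2] : Term S ℕ))
    (hs₂ : Eqv Γ ((p 2).rename ![0, 1, 2]) (s.rename ![0, 0, 1, 2] : Term S ℕ)) :
    ∃ q : ℕ → Term S (Fin 3),
      q 1 = s.rename ![0, 1, 1, 2] ∧ HMChain Γ (n - 1) q := by
  obtain ⟨h1, h2, h3⟩ := hp
  set m : Term S (Fin 3) := s.rename ![0, 1, 1, 2] with hm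
  -- e1 : p₁(x,y,y) ≈ s(x,y,y,y)
  have e1 : Eqv Γ ((p 1).rename (![0, 1, 1] : Fin 3 → ℕ))
      (s.rename (![0, 1, 1, 1] : Fin 4 → ℕ)) := by
    have h := hs₁.sbst (fun k => (Term.var (min k 1) : Term S ℕ))
    rw [Term.rename_subst, Term.rename_subst] at h
    have hL : (p 1).subst ((fun k => (Term.var (min k 1) : Term S ℕ)) ∘ ![0, 1, 2])
        = (p 1).rename ![0, 1, 1] := by
      rw [Term.rename]; congr 1; funext x; fin_cases x <;> rfl
    have hR : s.subst ((fun k => (Term.var (min k 1) : Term S ℕ)) ∘ ![0, 1, 2, 2])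
        = s.rename ![0, 1, 1, 1] := by
      rw [Term.rename]; congr 1; funext x; fin_cases x <;> rfl
    rwa [hL, hR] at h
  -- e2 : p₂(x,x,y) ≈ s(x,x,x,y)
  have e2 : Eqv Γ ((p 2).rename (![0, 0, 1] : Fin 3 → ℕ))
      (s.rename (![0, 0, 0, 1] : Fin 4 → ℕ)) := by
    have h := hs₂.sbst (fun k => (Term.var (k - 1) : Term S ℕ))
    rw [Term.rename_subst, Term.rename_subst] at h
    have hL : (p 2).subst ((fun k => (Term.var (k - 1) : Term S ℕ)) ∘ ![0, 1, 2])
        = (p 2).rename ![0, 0, 1] := by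
      rw [Term.rename]; congr 1; funext x; fin_cases x <;> rfl
    have hR : s.subst ((fun k => (Term.var (k - 1) : Term S ℕ)) ∘ ![0, 0, 1, 2])
        = s.rename ![0, 0, 0, 1] := by
      rw [Term.rename]; congr 1; funext x; fin_cases x <;> rfl
    rwa [hL, hR] at h
  have em1 : m.rename (![0, 1, 1] : Fin 3 → ℕ) = s.rename ![0, 1, 1, 1] := by
    rw [hm, Term.rename_rename]; congr 1; funext x; fin_cases x <;> rfl
  have em2 : m.rename (![0, 0, 1] : Fin 3 → ℕ) = s.rename ![0, 0, 0, 1] := by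
    rw [hm, Term.rename_rename]; congr 1; funext x; fin_cases x <;> rfl
  refine ⟨fun i => if 2 ≤ i then p (i + 1) else m, by norm_num, ?_, ?_, ?_⟩
  · -- x ≈ q₁(x,y,y)
    simp only [show ¬ (2 ≤ 1) by norm_num, if_false]
    rw [em1]
    exact h1.trans e1
  · intro i hi0 hi
    rcases Nat.lt_or_ge i 2 with h | h
    · have : i = 1 := by omega
      subst this
      simp only [show ¬ (2 ≤ 1) by norm_num, if_false, show (2:ℕ) ≤ 1 + 1 from le_refl 2,
        if_true]
      rw [em2]
      exact e2.symm.trans (h2 2 (by norm_num) (by omega))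
    · simp only [if_pos h, if_pos (by omega : 2 ≤ i + 1)]
      exact h2 (i + 1) (by omega) (by omega)
  · rcases eq_or_lt_of_le (Nat.succ_le_of_lt hn) with h | h
    · -- n = 3
      have hn3 : n = 3 := h.symm
      subst hn3
      simp only [show (3:ℕ) - 1 - 1 = 1 from rfl, show ¬ (2 ≤ 1) by norm_num, if_false]
      rw [em2]
      exact e2.symm.trans h3
    · -- n > 3
      have h4 : 2 ≤ n - 1 - 1 := by omega
      simp only [if_pos h4]
      have : n - 1 - 1 + 1 = n - 1 := by omega
      rw [this]
      exact h3

end UA
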